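/- arXiv:2605.24506 — 2 statements merged into one kernel-verified Lean document; each statement's English description precedes it below -/
import Mathlib

section
/- (S-procedure, lossless case with one constraint) Let Q₀, Q₁ be real symmetric n×n matrices and suppose there exists x̄ with x̄ᵀQ₁x̄ > 0. Then (for all x: xᵀQ₁x ≥ 0 implies xᵀQ₀x ≤ 0) if and only if there exists λ ≥ 0 such that Q₀ + λQ₁ is negative semidefinite. -/
open Matrix

/-- A matrix `M` is negative semidefinite iff `-M` is positive semidefinite. -/
def Matrix.NegSemidef {m : Type*} [Fintype m] (M : Matrix m m ℝ) : Prop :=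
  (-M).PosSemidef

private lemma quad_expand {n : ℕ} (Q : Matrix (Fin n) (Fin n) ℝ) (x y : Fin n → ℝ) (u : ℝ) :
    (u • x + y) ⬝ᵥ Q.mulVec (u • x + y) =
      u^2 * (x ⬝ᵥ Q.mulVec x) + u * (x ⬝ᵥ Q.mulVec y + y ⬝ᵥ Q.mulVec x) + y ⬝ᵥ Q.mulVec y := by
  simp [Matrix.mulVec_add, Matrix.mulVec_smul, dotProduct_add, add_dotProduct,
    dotProduct_smul, smul_dotProduct, smul_eq_mul]
  ring

private lemma key_real (ax ay bx b2 c d : ℝ) (hbx : bx < 0) (hby : 0 < b2)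
    (H : ∀ u : ℝ, 0 ≤ u^2 * bx + u * c + b2 → u^2 * ax + u * d + ay ≤ 0) :
    ax * b2 ≤ ay * bx := by
  have hdisc : 0 ≤ c^2 - 4 * bx * b2 := by nlinarith [sq_nonneg c]
  set r := Real.sqrt (c^2 - 4 * bx * b2) with hrdef
  have hr2 : r^2 = c^2 - 4 * bx * b2 := Real.sq_sqrt hdisc
  have hr0 : 0 ≤ r := Real.sqrt_nonneg _
  have hbx0 : bx ≠ 0 := ne_of_lt hbx
  set u₁ := (-c + r) / (2 * bx) with hu1
  set u₂ := (-c - r) / (2 * bx) with hu2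
  have hroot1 : u₁^2 * bx + u₁ * c + b2 = 0 := by
    have h1 : (u₁^2 * bx + u₁ * c + b2) * (4 * bx) = r^2 - c^2 + 4 * bx * b2 := by
      rw [hu1]; field_simp; ring
    have h2 : (u₁^2 * bx + u₁ * c + b2) * (4 * bx) = 0 := by rw [h1]; linarith [hr2]
    exact (mul_eq_zero.mp h2).resolve_right (by positivity)
  have hroot2 : u₂^2 * bx + u₂ * c + b2 = 0 := by
    have h1 : (u₂^2 * bx + u₂ * c + b2) * (4 * bx) = r^2 - c^2 + 4 * bx * b2 := by
      rw [hu2]; field_simp; ring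
    have h2 : (u₂^2 * bx + u₂ * c + b2) * (4 * bx) = 0 := by rw [h1]; linarith [hr2]
    exact (mul_eq_zero.mp h2).resolve_right (by positivity)
  have hsum2 : 0 < (r - c) * (r + c) := by nlinarith [hr2]
  have hcr1 : 0 < -c + r := by nlinarith [hsum2, hr0]
  have hcr2 : -c - r < 0 := by nlinarith [hsum2, hr0]
  have hu1neg : u₁ < 0 := div_neg_of_pos_of_neg hcr1 (by linarith)
  have hu2pos : 0 < u₂ := div_pos_of_neg_of_neg hcr2 (by linarith)
  have hprod : u₁ * u₂ * bx = b2 := by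
    have h1 : (u₁ * u₂ * bx) * (4 * bx) = c^2 - r^2 := by
      rw [hu1, hu2]; field_simp; ring
    have h2 : (u₁ * u₂ * bx) * (4 * bx) = b2 * (4 * bx) := by
      rw [h1]; nlinarith [hr2]
    exact mul_right_cancel₀ (by positivity) h2
  have hF1 : u₁^2 * ax + u₁ * d + ay ≤ 0 := H u₁ (le_of_eq hroot1.symm)
  have hF2 : u₂^2 * ax + u₂ * d + ay ≤ 0 := H u₂ (le_of_eq hroot2.symm)
  have hA : u₂ * (u₁^2 * ax + u₁ * d + ay) ≤ 0 :=
    mul_nonpos_of_nonneg_of_nonpos hu2pos.le hF1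
  have hB : (-u₁) * (u₂^2 * ax + u₂ * d + ay) ≤ 0 :=
    mul_nonpos_of_nonneg_of_nonpos (by linarith) hF2
  have hsum : (u₂ - u₁) * (ay - ax * (u₁ * u₂)) ≤ 0 := by nlinarith [hA, hB]
  have hkey : ay - ax * (u₁ * u₂) ≤ 0 := by
    have hpos : 0 < u₂ - u₁ := by linarith
    nlinarith [hsum]
  have hfin : 0 ≤ (-(ay - ax * (u₁ * u₂))) * (-bx) :=
    mul_nonneg (neg_nonneg.mpr hkey) (neg_nonneg.mpr hbx.le)
  rw [← hprod]
  nlinarith [hfin]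

private lemma key {n : ℕ} (Q₀ Q₁ : Matrix (Fin n) (Fin n) ℝ)
    (h : ∀ x : Fin n → ℝ, 0 ≤ x ⬝ᵥ Q₁.mulVec x → x ⬝ᵥ Q₀.mulVec x ≤ 0)
    (x y : Fin n → ℝ) (hbx : x ⬝ᵥ Q₁.mulVec x < 0) (hby : 0 < y ⬝ᵥ Q₁.mulVec y) :
    (x ⬝ᵥ Q₀.mulVec x) * (y ⬝ᵥ Q₁.mulVec y) ≤ (y ⬝ᵥ Q₀.mulVec y) * (x ⬝ᵥ Q₁.mulVec x) := by
  refine key_real _ _ _ _ (x ⬝ᵥ Q₁.mulVec y + y ⬝ᵥ Q₁.mulVec x)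
    (x ⬝ᵥ Q₀.mulVec y + y ⬝ᵥ Q₀.mulVec x) hbx hby ?_
  intro u hu
  have hb : 0 ≤ (u • x + y) ⬝ᵥ Q₁.mulVec (u • x + y) := by
    rw [quad_expand]; linarith [hu]
  have := h _ hb
  rw [quad_expand] at this
  linarith [this]

/-- Lossless S-procedure with one quadratic constraint: for symmetric `Q₀, Q₁`, if there
exists `x̄` with `x̄ᵀQ₁x̄ > 0` (Slater condition), then
`(∀ x, xᵀQ₁x ≥ 0 → xᵀQ₀x ≤ 0)` iff there exists `λ ≥ 0` with `Q₀ + λQ₁` negative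
semidefinite. -/
theorem stmt_8 {n : ℕ} (Q₀ Q₁ : Matrix (Fin n) (Fin n) ℝ)
    (hQ₀ : Q₀.IsHermitian) (hQ₁ : Q₁.IsHermitian)
    (hSlater : ∃ x : Fin n → ℝ, 0 < x ⬝ᵥ Q₁.mulVec x) :
    (∀ x : Fin n → ℝ, 0 ≤ x ⬝ᵥ Q₁.mulVec x → x ⬝ᵥ Q₀.mulVec x ≤ 0) ↔
      ∃ l : ℝ, 0 ≤ l ∧ (Q₀ + l • Q₁).NegSemidef := by
  constructor
  · intro h
    obtain ⟨xb, hxb⟩ := hSlater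
    set T : Set ℝ := {l | ∃ y : Fin n → ℝ, 0 < y ⬝ᵥ Q₁.mulVec y ∧
      l = -(y ⬝ᵥ Q₀.mulVec y) / (y ⬝ᵥ Q₁.mulVec y)} with hT
    have hTne : T.Nonempty := ⟨_, xb, hxb, rfl⟩
    have hTlb : ∀ l ∈ T, (0:ℝ) ≤ l := by
      rintro l ⟨y, hy, rfl⟩
      have : y ⬝ᵥ Q₀.mulVec y ≤ 0 := h y hy.le
      exact div_nonneg (by linarith) hy.le
    have hTbdd : BddBelow T := ⟨0, hTlb⟩
    set l := sInf T with hl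
    have hl0 : 0 ≤ l := le_csInf hTne hTlb
    refine ⟨l, hl0, ?_⟩
    have hmain : ∀ x : Fin n → ℝ, x ⬝ᵥ Q₀.mulVec x + l * (x ⬝ᵥ Q₁.mulVec x) ≤ 0 := by
      intro x
      rcases lt_trichotomy (x ⬝ᵥ Q₁.mulVec x) 0 with hb | hb | hb
      · have hlo : (x ⬝ᵥ Q₀.mulVec x) / (-(x ⬝ᵥ Q₁.mulVec x)) ≤ l := by
          apply le_csInf hTne
          rintro m ⟨y, hy, rfl⟩
          rw [div_le_div_iff₀ (by linarith) hy]
          nlinarith [key Q₀ Q₁ h x y hb hy]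
        rw [div_le_iff₀ (by linarith)] at hlo
        nlinarith [hlo]
      · have := h x (le_of_eq hb.symm)
        rw [hb]; linarith
      · have hle : l ≤ -(x ⬝ᵥ Q₀.mulVec x) / (x ⬝ᵥ Q₁.mulVec x) :=
          csInf_le hTbdd ⟨x, hb, rfl⟩
        rw [le_div_iff₀ hb] at hle
        nlinarith [hle]
    refine posSemidef_iff_dotProduct_mulVec.mpr ⟨?_, ?_⟩
    · show (-(Q₀ + l • Q₁))ᴴ = -(Q₀ + l • Q₁)
      rw [conjTranspose_neg, conjTranspose_add, conjTranspose_smul, hQ₀.eq, hQ₁.eq,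
        star_trivial]
    · intro x
      have hx := hmain x
      have heq : (star x) ⬝ᵥ (-(Q₀ + l • Q₁)).mulVec x
          = -(x ⬝ᵥ Q₀.mulVec x + l * (x ⬝ᵥ Q₁.mulVec x)) := by
        simp [Matrix.neg_mulVec, Matrix.add_mulVec, Matrix.smul_mulVec,
          dotProduct_neg, dotProduct_add, dotProduct_smul, smul_eq_mul]
      rw [heq]
      linarith
  · rintro ⟨l, hl0, hns⟩ x hx
    have hpsd := (posSemidef_iff_dotProduct_mulVec.mp (hns : (-(Q₀ + l • Q₁)).PosSemidef)).2 x
    have heq : (star x) ⬝ᵥ (-(Q₀ + l • Q₁)).mulVec x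
        = -(x ⬝ᵥ Q₀.mulVec x + l * (x ⬝ᵥ Q₁.mulVec x)) := by
      simp [Matrix.neg_mulVec, Matrix.add_mulVec, Matrix.smul_mulVec,
        dotProduct_neg, dotProduct_add, dotProduct_smul, smul_eq_mul]
    rw [heq] at hpsd
    nlinarith [mul_nonneg hl0 hx]
end

section
/- Let f : ℝⁿ → ℝⁿ be continuously differentiable and suppose there exist a symmetric positive definite matrix P and β > 0 such that Df(x)ᵀP + P Df(x) ⪯ -2βP for all x. Then for any two solutions x(t), y(t) of ẋ = f(x), the weighted distance satisfies (x(t)-y(t))ᵀP(x(t)-y(t)) ≤ e^{-2βt} (x(0)-y(0))ᵀP(x(0)-y(0)). -/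
open Matrix

private lemma comp_deriv {n : ℕ} {u : ℝ → Fin n → ℝ} {u' : Fin n → ℝ} {t : ℝ}
    (h : HasDerivAt u u' t) (i : Fin n) : HasDerivAt (fun s => u s i) (u' i) t := by
  have := (ContinuousLinearMap.proj (R := ℝ) (φ := fun _ : Fin n => ℝ) i).hasFDerivAt.comp_hasDerivAt t h
  exact hasDerivAt_pi.1 h i

private lemma dot_deriv {n : ℕ} (v : Fin n → ℝ) (P : Matrix (Fin n) (Fin n) ℝ)
    {u : ℝ → Fin n → ℝ} {u' : Fin n → ℝ} {t : ℝ} (h : HasDerivAt u u' t) :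
    HasDerivAt (fun s => v ⬝ᵥ P.mulVec (u s)) (v ⬝ᵥ P.mulVec u') t := by
  have H : HasDerivAt (fun s => ∑ i, ∑ j, v i * (P i j * u s j))
      (∑ i, ∑ j, v i * (P i j * u' j)) t := by
    apply HasDerivAt.fun_sum; intro i _
    apply HasDerivAt.fun_sum; intro j _
    exact ((comp_deriv h j).const_mul (P i j)).const_mul (v i)
  have e : ∀ w : Fin n → ℝ, v ⬝ᵥ P.mulVec w = ∑ i, ∑ j, v i * (P i j * w j) := by
    intro w; simp [dotProduct, mulVec, Finset.mul_sum]
  rw [e]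
  exact H.congr_deriv rfl |>.congr_of_eventuallyEq (by filter_upwards with s; rw [e])

private lemma quad_deriv {n : ℕ} (P : Matrix (Fin n) (Fin n) ℝ)
    {u : ℝ → Fin n → ℝ} {u' : Fin n → ℝ} {t : ℝ} (h : HasDerivAt u u' t) :
    HasDerivAt (fun s => u s ⬝ᵥ P.mulVec (u s))
      (u' ⬝ᵥ P.mulVec (u t) + u t ⬝ᵥ P.mulVec u') t := by
  have H : HasDerivAt (fun s => ∑ i, ∑ j, u s i * (P i j * u s j))
      (∑ i, ∑ j, (u' i * (P i j * u t j) + u t i * (P i j * u' j))) t := by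
    apply HasDerivAt.fun_sum; intro i _
    apply HasDerivAt.fun_sum; intro j _
    exact (comp_deriv h i).mul ((comp_deriv h j).const_mul (P i j))
  have e : ∀ w : Fin n → ℝ, w ⬝ᵥ P.mulVec w = ∑ i, ∑ j, w i * (P i j * w j) := by
    intro w; simp [dotProduct, mulVec, Finset.mul_sum]
  have e2 : u' ⬝ᵥ P.mulVec (u t) + u t ⬝ᵥ P.mulVec u'
      = ∑ i, ∑ j, (u' i * (P i j * u t j) + u t i * (P i j * u' j)) := by
    simp [dotProduct, mulVec, Finset.mul_sum, Finset.sum_add_distrib]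
  rw [e2] at *
  exact H.congr_of_eventuallyEq (by filter_upwards with s; rw [e])

/-- Contraction analysis with a constant metric: if `f` is `C¹` and its Jacobian satisfies
`Df(x)ᵀP + P Df(x) ⪯ -2βP` for all `x` (stated equivalently via quadratic forms:
`2 vᵀ P (Df(x)v) ≤ -2β vᵀPv` for all `x, v`), for some symmetric positive definite `P`
and `β > 0`, then any two solutions of `ẋ = f(x)` satisfy
`(x(t)-y(t))ᵀP(x(t)-y(t)) ≤ e^{-2βt}(x(0)-y(0))ᵀP(x(0)-y(0))` for `t ≥ 0`. -/
theorem stmt_16 {n : ℕ} (f : (Fin n → ℝ) → Fin n → ℝ) (hf : ContDiff ℝ 1 f)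
    (P : Matrix (Fin n) (Fin n) ℝ) (hP : P.PosDef) (β : ℝ) (hβ : 0 < β)
    (hcontr : ∀ x v : Fin n → ℝ,
      2 * (v ⬝ᵥ P.mulVec (fderiv ℝ f x v)) ≤ -(2 * β) * (v ⬝ᵥ P.mulVec v))
    (x y : ℝ → Fin n → ℝ)
    (hx : ∀ t : ℝ, HasDerivAt x (f (x t)) t)
    (hy : ∀ t : ℝ, HasDerivAt y (f (y t)) t) :
    ∀ t : ℝ, 0 ≤ t →
      (x t - y t) ⬝ᵥ P.mulVec (x t - y t) ≤
        Real.exp (-(2 * β) * t) * ((x 0 - y 0) ⬝ᵥ P.mulVec (x 0 - y 0)) := by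
  have hPsymm : Pᵀ = P := by
    have := hP.isHermitian; simpa [Matrix.IsHermitian, Matrix.conjTranspose_eq_transpose_of_trivial] using this
  have hdf : Differentiable ℝ f := hf.differentiable one_ne_zero
  -- symmetry: swap arguments of the form
  have hsym : ∀ a b : Fin n → ℝ, a ⬝ᵥ P.mulVec b = b ⬝ᵥ P.mulVec a := by
    intro a b
    rw [Matrix.dotProduct_mulVec, ← Matrix.mulVec_transpose, hPsymm, dotProduct_comm]
  -- mean value bound
  have key : ∀ a b : Fin n → ℝ,
      2 * ((a - b) ⬝ᵥ P.mulVec (f a - f b)) ≤ -(2 * β) * ((a - b) ⬝ᵥ P.mulVec (a - b)) := by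
    intro a b
    set v := a - b with hv
    set C := -β * (v ⬝ᵥ P.mulVec v) with hC
    set g : ℝ → ℝ := fun s => v ⬝ᵥ P.mulVec (f (b + s • v)) with hg
    have hcurve : ∀ s : ℝ, HasDerivAt (fun s : ℝ => b + s • v) v s := by
      intro s
      simpa using ((hasDerivAt_id s).smul_const v).const_add b
    have hg' : ∀ s : ℝ, HasDerivAt g (v ⬝ᵥ P.mulVec (fderiv ℝ f (b + s • v) v)) s := by
      intro s
      have hfc : HasDerivAt (fun s : ℝ => f (b + s • v)) (fderiv ℝ f (b + s • v) v) s :=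
        (hdf (b + s • v)).hasFDerivAt.comp_hasDerivAt s (hcurve s)
      exact dot_deriv v P hfc
    have hgle : ∀ s : ℝ, v ⬝ᵥ P.mulVec (fderiv ℝ f (b + s • v) v) ≤ C := by
      intro s
      have := hcontr (b + s • v) v
      nlinarith
    -- monotone argument: h s = C * s - g s is monotone
    have hmono : Monotone (fun s => C * s - g s) := by
      apply monotone_of_deriv_nonneg
      · exact (differentiable_const C |>.mul differentiable_id).sub
          (fun s => (hg' s).differentiableAt)
      · intro s
        have : HasDerivAt (fun s => C * s - g s)
            (C - v ⬝ᵥ P.mulVec (fderiv ℝ f (b + s • v) v)) s := by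
          simpa using ((hasDerivAt_id s).const_mul C).fun_sub (hg' s)
        rw [this.deriv]
        linarith [hgle s]
    have h01 := hmono (show (0:ℝ) ≤ 1 by norm_num)
    simp only [mul_one, mul_zero, zero_sub] at h01
    have hg1 : g 1 = v ⬝ᵥ P.mulVec (f a) := by
      simp [hg, hv]
    have hg0 : g 0 = v ⬝ᵥ P.mulVec (f b) := by simp [hg]
    have : v ⬝ᵥ P.mulVec (f a - f b) = g 1 - g 0 := by
      rw [hg1, hg0, Matrix.mulVec_sub, dotProduct_sub]
    rw [this]
    have : g 1 - g 0 ≤ C := by linarith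
    nlinarith [this]
  -- Gronwall via monotonicity of exp(2βt) * V(t)
  set V : ℝ → ℝ := fun t => (x t - y t) ⬝ᵥ P.mulVec (x t - y t) with hV
  have hV' : ∀ t : ℝ, HasDerivAt V
      (2 * ((x t - y t) ⬝ᵥ P.mulVec (f (x t) - f (y t)))) t := by
    intro t
    have hsub : HasDerivAt (fun t => x t - y t) (f (x t) - f (y t)) t := (hx t).sub (hy t)
    have := quad_deriv P hsub
    have heq : (f (x t) - f (y t)) ⬝ᵥ P.mulVec (x t - y t)
        + (x t - y t) ⬝ᵥ P.mulVec (f (x t) - f (y t))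
        = 2 * ((x t - y t) ⬝ᵥ P.mulVec (f (x t) - f (y t))) := by
      rw [hsym]; ring
    rw [← heq]
    exact this
  set G : ℝ → ℝ := fun t => Real.exp (2 * β * t) * V t with hG
  have hG' : ∀ t : ℝ, HasDerivAt G
      (2 * β * Real.exp (2 * β * t) * V t
        + Real.exp (2 * β * t) * (2 * ((x t - y t) ⬝ᵥ P.mulVec (f (x t) - f (y t))))) t := by
    intro t
    have he : HasDerivAt (fun t => Real.exp (2 * β * t)) (2 * β * Real.exp (2 * β * t)) t := by
      have := ((hasDerivAt_id t).const_mul (2 * β)).exp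
      simpa [mul_comm] using this
    exact he.mul (hV' t)
  have hanti : Antitone G := by
    apply antitone_of_deriv_nonpos
    · exact fun t => (hG' t).differentiableAt
    · intro t
      rw [(hG' t).deriv]
      have h1 := key (x t) (y t)
      have h2 : (0:ℝ) < Real.exp (2 * β * t) := Real.exp_pos _
      nlinarith [h1, h2]
  intro t ht
  have := hanti ht
  simp only [hG, mul_zero, Real.exp_zero, one_mul] at this
  have h2 : (0:ℝ) < Real.exp (2 * β * t) := Real.exp_pos _
  have heq : Real.exp (-(2 * β) * t) = (Real.exp (2 * β * t))⁻¹ := by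
    rw [← Real.exp_neg]; ring_nf
  rw [heq]
  rw [inv_mul_eq_div, le_div_iff₀ h2]
  calc V t * Real.exp (2 * β * t) = G t := by rw [hG]; ring
    _ ≤ V 0 := this
end
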